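/- Let s₁ > 0, s₂ ≥ 0 and 0 ≤ k ≤ s₁ be real numbers. There exists a constant C = C(s₁, s₂, k) such that for all ξ₁, ξ₂ ∈ ℝ: |ξ₁|^k · ( (1+ξ₁²)^{(s₁−k)/2} + (1+ξ₂²)^{(s₁−k)s₂/(2s₁)} ) ≤ C·( (1+ξ₁²)^{s₁/2} + (1+ξ₂²)^{s₂/2} ). -/

import Mathlib

/-- the pointwise symbol inequality behind the boundedness
`∂_x^k : H^{s₁,s₂}_ω → H^{s₁−k, s₂(s₁−k)/s₁}_ω`:
`|ξ₁|^k ((1+ξ₁²)^{(s₁−k)/2} + (1+ξ₂²)^{(s₁−k)s₂/(2s₁)})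
  ≤ C ((1+ξ₁²)^{s₁/2} + (1+ξ₂²)^{s₂/2})`. -/
theorem stmt_6 (s₁ s₂ k : ℝ) (hs₁ : 0 < s₁) (hs₂ : 0 ≤ s₂) (hk0 : 0 ≤ k) (hk : k ≤ s₁) :
    ∃ C : ℝ, ∀ ξ₁ ξ₂ : ℝ,
      |ξ₁| ^ k * ((1 + ξ₁ ^ 2) ^ ((s₁ - k) / 2)
          + (1 + ξ₂ ^ 2) ^ ((s₁ - k) * s₂ / (2 * s₁))) ≤
        C * ((1 + ξ₁ ^ 2) ^ (s₁ / 2) + (1 + ξ₂ ^ 2) ^ (s₂ / 2)) := by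
  refine ⟨2, fun ξ₁ ξ₂ => ?_⟩
  have h1 : (0:ℝ) < 1 + ξ₁ ^ 2 := by positivity
  have h2 : (0:ℝ) < 1 + ξ₂ ^ 2 := by positivity
  set a := (1 + ξ₁ ^ 2 : ℝ) with ha
  set b := (1 + ξ₂ ^ 2 : ℝ) with hb
  -- |ξ₁|^k ≤ a^(k/2)
  have habs : |ξ₁| ^ k ≤ a ^ (k / 2) := by
    have e1 : |ξ₁| ^ k = (|ξ₁| ^ (2:ℝ)) ^ (k / 2) := by
      rw [← Real.rpow_mul (abs_nonneg _)]
      ring_nf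
    rw [e1]
    apply Real.rpow_le_rpow (by positivity) _ (by positivity)
    rw [Real.rpow_two, sq_abs]
    linarith
  -- Young / weighted AM-GM for the cross term
  have hyoung : a ^ (k / 2) * b ^ ((s₁ - k) * s₂ / (2 * s₁)) ≤
      a ^ (s₁ / 2) + b ^ (s₂ / 2) := by
    have e2 : a ^ (k / 2) = (a ^ (s₁ / 2)) ^ (k / s₁) := by
      rw [← Real.rpow_mul h1.le]
      congr 1
      field_simp
    have e3 : b ^ ((s₁ - k) * s₂ / (2 * s₁)) = (b ^ (s₂ / 2)) ^ ((s₁ - k) / s₁) := by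
      rw [← Real.rpow_mul h2.le]
      congr 1
      field_simp
    rw [e2, e3]
    have hw : k / s₁ + (s₁ - k) / s₁ = 1 := by field_simp; ring
    calc (a ^ (s₁ / 2)) ^ (k / s₁) * (b ^ (s₂ / 2)) ^ ((s₁ - k) / s₁)
        ≤ (k / s₁) * a ^ (s₁ / 2) + ((s₁ - k) / s₁) * b ^ (s₂ / 2) :=
          Real.geom_mean_le_arith_mean2_weighted (by positivity)
            (by apply div_nonneg <;> linarith) (by positivity) (by positivity) hw
      _ ≤ a ^ (s₁ / 2) + b ^ (s₂ / 2) := by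
          have hA : (0:ℝ) < a ^ (s₁ / 2) := by positivity
          have hB : (0:ℝ) < b ^ (s₂ / 2) := by positivity
          have w1 : k / s₁ ≤ 1 := by rw [div_le_one hs₁]; linarith
          have w2 : (s₁ - k) / s₁ ≤ 1 := by rw [div_le_one hs₁]; linarith
          nlinarith
  have hcombine : a ^ (k / 2) * a ^ ((s₁ - k) / 2) = a ^ (s₁ / 2) := by
    rw [← Real.rpow_add h1]
    ring_nf
  have hmul : |ξ₁| ^ k * (a ^ ((s₁ - k) / 2) + b ^ ((s₁ - k) * s₂ / (2 * s₁))) ≤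
      a ^ (k / 2) * (a ^ ((s₁ - k) / 2) + b ^ ((s₁ - k) * s₂ / (2 * s₁))) := by
    apply mul_le_mul_of_nonneg_right habs (by positivity)
  calc |ξ₁| ^ k * (a ^ ((s₁ - k) / 2) + b ^ ((s₁ - k) * s₂ / (2 * s₁)))
      ≤ a ^ (k / 2) * (a ^ ((s₁ - k) / 2) + b ^ ((s₁ - k) * s₂ / (2 * s₁))) := hmul
    _ = a ^ (s₁ / 2) + a ^ (k / 2) * b ^ ((s₁ - k) * s₂ / (2 * s₁)) := by
        rw [mul_add, hcombine]
    _ ≤ a ^ (s₁ / 2) + (a ^ (s₁ / 2) + b ^ (s₂ / 2)) := by linarith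
    _ ≤ 2 * (a ^ (s₁ / 2) + b ^ (s₂ / 2)) := by
        have hB : (0:ℝ) < b ^ (s₂ / 2) := by positivity
        linarith
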